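/- For every natural number n, the symmetric Pascal matrix of odd size has eigenvalue 1: det(Q_{2n} − I) = 0, where I is the (2n+1)×(2n+1) identity matrix. -/

import Mathlib

open Matrix Finset

/-- The lower triangular Pascal matrix of size `n+1` over `ℤ`. -/
def pascalL (n : ℕ) : Matrix (Fin (n+1)) (Fin (n+1)) ℤ :=
  Matrix.of fun i j => (Nat.choose i.val j.val : ℤ)

/-- The symmetric Pascal matrix `Q_n = P_n * P_nᵀ`. -/
def pascalQ (n : ℕ) : Matrix (Fin (n+1)) (Fin (n+1)) ℤ :=
  pascalL n * (pascalL n)ᵀ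

/-- The sign diagonal matrix. -/
def signD (n : ℕ) : Matrix (Fin (n+1)) (Fin (n+1)) ℤ :=
  Matrix.diagonal fun i => (-1 : ℤ) ^ (i : ℕ)

lemma signD_mul_self (n : ℕ) : signD n * signD n = 1 := by
  simp [signD, Matrix.diagonal_mul_diagonal, ← pow_add, ← two_mul, pow_mul]

lemma signD_transpose (n : ℕ) : (signD n)ᵀ = signD n := by
  simp [signD, Matrix.diagonal_transpose]

lemma key_sum (n i j : ℕ) (hi : i ≤ n) :
    ∑ k ∈ Finset.range (n+1), ((-1 : ℤ))^k * (i.choose k) * (k.choose j)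
      = if i = j then (-1 : ℤ)^i else 0 := by
  by_cases hji : j ≤ i
  · have hsub : Finset.Ico j (i+1) ⊆ Finset.range (n+1) := by
      intro k hk
      simp only [Finset.mem_Ico] at hk
      exact Finset.mem_range.2 (lt_of_lt_of_le hk.2 (by omega))
    have h0 : ∀ k ∈ Finset.range (n+1), k ∉ Finset.Ico j (i+1) →
        ((-1 : ℤ))^k * (i.choose k) * (k.choose j) = 0 := by
      intro k _ hk
      simp only [Finset.mem_Ico, not_and_or, not_le, not_lt] at hk
      rcases hk with h | h
      · simp [Nat.choose_eq_zero_of_lt h]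
      · simp [Nat.choose_eq_zero_of_lt h]
    rw [← Finset.sum_subset hsub h0, Finset.sum_Ico_eq_sum_range]
    have hrange : i + 1 - j = i - j + 1 := by omega
    rw [hrange]
    have hterm : ∀ t ∈ Finset.range (i - j + 1),
        ((-1 : ℤ))^(j + t) * (i.choose (j + t)) * ((j + t).choose j)
          = ((-1 : ℤ)^j * (i.choose j)) * ((-1 : ℤ)^t * ((i - j).choose t)) := by
      intro t ht
      have ht' : j + t ≤ i := by
        have := Finset.mem_range.1 ht; omega
      have := Nat.choose_mul (n := i) (Nat.le_add_right j t)
      rw [Nat.add_sub_cancel_left] at this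
      have hc : ((i.choose (j + t) : ℤ)) * ((j + t).choose j) = (i.choose j) * ((i - j).choose t) := by
        exact_mod_cast congrArg (Nat.cast : ℕ → ℤ) this
      rw [pow_add]
      linear_combination ((-1:ℤ)^j * (-1:ℤ)^t) * hc
    rw [Finset.sum_congr rfl hterm, ← Finset.mul_sum, Int.alternating_sum_range_choose]
    by_cases hij : i = j
    · subst hij
      simp
    · have : i - j ≠ 0 := by omega
      simp [this, hij]
  · have h0 : ∀ k ∈ Finset.range (n+1),
        ((-1 : ℤ))^k * (i.choose k) * (k.choose j) = 0 := by
      intro k _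
      by_cases hk : k ≤ i
      · have : k < j := by omega
        simp [Nat.choose_eq_zero_of_lt this]
      · have : i < k := by omega
        simp [Nat.choose_eq_zero_of_lt this]
    rw [Finset.sum_eq_zero h0]
    have : i ≠ j := by omega
    simp [this]

lemma pascalL_mul_inv (n : ℕ) :
    pascalL n * (signD n * pascalL n * signD n) = 1 := by
  have hDPD : signD n * pascalL n * signD n
      = Matrix.of (fun i j : Fin (n+1) =>
          (-1 : ℤ)^(i : ℕ) * (i.val.choose j.val) * (-1 : ℤ)^(j : ℕ)) := by
    ext i j
    simp [signD, pascalL, Matrix.mul_diagonal, Matrix.diagonal_mul, mul_assoc]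
  rw [hDPD]
  ext i j
  rw [Matrix.mul_apply]
  simp only [pascalL, Matrix.of_apply, Matrix.one_apply]
  have : ∑ k : Fin (n+1), ((i.val.choose k.val : ℤ)) *
      ((-1 : ℤ)^(k : ℕ) * (k.val.choose j.val) * (-1 : ℤ)^(j : ℕ))
      = (-1 : ℤ)^(j : ℕ) * ∑ k ∈ Finset.range (n+1),
          ((-1 : ℤ))^k * (i.val.choose k) * (k.choose j.val) := by
    rw [Finset.mul_sum, ← Fin.sum_univ_eq_sum_range]
    apply Finset.sum_congr rfl
    intro k _
    ring
  rw [this, key_sum n i.val j.val (by omega)]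
  by_cases hij : i = j
  · subst hij
    simp [← pow_add, ← two_mul, pow_mul]
  · have : i.val ≠ j.val := fun h => hij (Fin.ext h)
    simp [this, hij]

lemma pascalL_det (n : ℕ) : (pascalL n).det = 1 := by
  have hbt : (pascalL n).BlockTriangular OrderDual.toDual := by
    intro i j h
    have hij : (i : ℕ) < (j : ℕ) := h
    simp [pascalL, Nat.choose_eq_zero_of_lt hij]
  rw [Matrix.det_of_lowerTriangular (pascalL n) hbt]
  simp [pascalL]

/-- The symmetric Pascal matrix of odd size `2n+1` has eigenvalue `1`. -/
theorem det_pascalQ_even_sub_one (n : ℕ) : (pascalQ (2*n) - 1).det = 0 := by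
  set m := 2 * n with hm
  set P := pascalL m
  set D := signD m
  set A := Pᵀ - D * P * D with hA
  have hfact : pascalQ m - 1 = P * A := by
    rw [hA, Matrix.mul_sub, pascalL_mul_inv m]
    rfl
  have h3 : D * (D * P * D) * D = P := by
    calc D * (D * P * D) * D = (D * D) * P * (D * D) := by noncomm_ring
      _ = P := by rw [signD_mul_self]; simp
  have hDAD : D * A * D = D * Pᵀ * D - P := by
    rw [hA]
    have expand : D * (Pᵀ - D * P * D) * D = D * Pᵀ * D - D * (D * P * D) * D := by
      noncomm_ring
    rw [expand, h3]
  have hAT : Aᵀ = -(D * A * D) := by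
    rw [hDAD, hA, Matrix.transpose_sub, Matrix.transpose_transpose,
      Matrix.transpose_mul, Matrix.transpose_mul, signD_transpose, ← Matrix.mul_assoc]
    abel
  have hdetD : D.det * D.det = 1 := by
    rw [← Matrix.det_mul, signD_mul_self, Matrix.det_one]
  have hdetA : A.det = 0 := by
    have h1 : A.det = Aᵀ.det := (Matrix.det_transpose A).symm
    rw [hAT] at h1
    have h2 : (-(D * A * D)).det = (-1 : ℤ)^(m+1) * (D.det * A.det * D.det) := by
      rw [Matrix.det_neg, Matrix.det_mul, Matrix.det_mul]
      simp [Fintype.card_fin]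
    rw [h2] at h1
    have hodd : (-1 : ℤ)^(m+1) = -1 := by
      rw [hm]
      have : 2 * n + 1 = 2 * n + 1 := rfl
      rw [show (2*n+1) = 2*n+1 from rfl, pow_succ, pow_mul]
      simp
    rw [hodd] at h1
    have : A.det = -(A.det) := by
      rw [h1]; nlinarith [hdetD]
    omega
  rw [hfact, Matrix.det_mul, hdetA, mul_zero]
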